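/- Suppose F ⊆ ℍ intersects every wedge in ℍ, where ℍ = { (x,y) ∈ ℝ² : y > 0 } is the open upper half plane. Then the set of unit vectors u ∈ 𝕊⁺ = 𝕊 ∩ ℍ such that T_u(F) is dense in ℝ is comeager in 𝕊⁺. -/

import Mathlib

set_option maxHeartbeats 1000000


open Filter Metric Set

/-- `Tu u : ℝ² → ℝ` is the orthogonal projection parallel to `u`, i.e. the orthogonal projection
(with the orthogonal complement of `u` identified isometrically with `ℝ`) whose fibers are the
lines parallel to `u`: `Tu u x = Tu u y ↔ x - y = t • u` for some `t : ℝ` (when `‖u‖ = 1`). -/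
def Tu (u x : EuclideanSpace ℝ (Fin 2)) : ℝ :=
  x 0 * u 1 - x 1 * u 0

/-- The open upper half plane `ℍ = { (x,y) ∈ ℝ² : y > 0 }`. -/
def upperH : Set (EuclideanSpace ℝ (Fin 2)) := {z | 0 < z 1}

/-- The wedge `C^{u,+}_{s,ε} = { t • v : t > s, ‖v‖ = 1, ‖v - u‖ < ε }` around `u`. -/
def wedgeH (u : EuclideanSpace ℝ (Fin 2)) (s ε : ℝ) : Set (EuclideanSpace ℝ (Fin 2)) :=
  {w | ∃ (t : ℝ) (v : EuclideanSpace ℝ (Fin 2)), s < t ∧ ‖v‖ = 1 ∧ ‖v - u‖ < ε ∧ w = t • v}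

/-- `𝕊⁺ = 𝕊 ∩ ℍ`, the upper half of the unit circle, as a subtype (with the subspace topology). -/
abbrev Splus : Type := {v : EuclideanSpace ℝ (Fin 2) // ‖v‖ = 1 ∧ 0 < v 1}

lemma esq (x : EuclideanSpace ℝ (Fin 2)) : ‖x‖ ^ 2 = x 0 ^ 2 + x 1 ^ 2 := by
  rw [EuclideanSpace.norm_eq, Real.sq_sqrt (by positivity)]
  simp [Fin.sum_univ_two, sq_abs]

lemma coord_le (x : EuclideanSpace ℝ (Fin 2)) (i : Fin 2) : |x i| ≤ ‖x‖ := by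
  have h := esq x
  have h2 : x i ^ 2 ≤ ‖x‖ ^ 2 := by
    fin_cases i <;> simp only [Fin.zero_eta, Fin.mk_one, Fin.isValue] <;>
      nlinarith [sq_nonneg (x 0), sq_nonneg (x 1)]
  nlinarith [abs_nonneg (x i), norm_nonneg x, sq_abs (x i)]

lemma keyDense (F : Set (EuclideanSpace ℝ (Fin 2)))
    (hint : ∀ (u : EuclideanSpace ℝ (Fin 2)) (s ε : ℝ), ‖u‖ = 1 → 0 < u 1 →
      0 < s → 0 < ε → wedgeH u s ε ⊆ upperH → (F ∩ wedgeH u s ε).Nonempty)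
    (a b : ℝ) (hab : a < b)
    (u₀ : EuclideanSpace ℝ (Fin 2)) (hu₀ : ‖u₀‖ = 1) (h1 : 0 < u₀ 1)
    (δ : ℝ) (hδ : 0 < δ) :
    ∃ u : EuclideanSpace ℝ (Fin 2), ‖u‖ = 1 ∧ 0 < u 1 ∧ ‖u - u₀‖ < δ ∧
      ∃ x ∈ F, a < Tu u x ∧ Tu u x < b := by
  obtain ⟨c, hc⟩ : ∃ c : ℝ, c = (a + b) / 2 := ⟨_, rfl⟩
  obtain ⟨δ', hδ'def⟩ : ∃ d : ℝ, d = min δ (u₀ 1) := ⟨_, rfl⟩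
  have hδ' : 0 < δ' := hδ'def ▸ lt_min hδ h1
  have hδ'δ : δ' ≤ δ := hδ'def ▸ min_le_left _ _
  have hδ'u : δ' ≤ u₀ 1 := hδ'def ▸ min_le_right _ _
  obtain ⟨ε, hε'⟩ : ∃ e : ℝ, e = δ' / 3 := ⟨_, rfl⟩
  have hε : 0 < ε := by rw [hε']; positivity
  obtain ⟨s, hs'⟩ : ∃ s : ℝ, s = (|c| + 1) * (2 + 6 / δ') := ⟨_, rfl⟩
  have hs : 0 < s := by rw [hs']; positivity
  have hwedge : wedgeH u₀ s ε ⊆ upperH := by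
    rintro w ⟨t, v, ht, hv, hvu, rfl⟩
    have ht0 : (0 : ℝ) < t := hs.trans ht
    have h := coord_le (v - u₀) 1
    rw [PiLp.sub_apply] at h
    have habs := abs_lt.1 (h.trans_lt hvu)
    have hv1 : 0 < v 1 := by linarith [habs.1]
    show 0 < (t • v) 1
    rw [PiLp.smul_apply, smul_eq_mul]
    positivity
  obtain ⟨x, hxF, t, v, hts, hv, hvu, hx⟩ := hint u₀ s ε hu₀ h1 hs hε hwedge
  have ht0 : (0 : ℝ) < t := hs.trans hts
  obtain ⟨r, hr'⟩ : ∃ r : ℝ, r = c / t := ⟨_, rfl⟩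
  have hrt : r * t = c := by rw [hr']; exact div_mul_cancel₀ c (ne_of_gt ht0)
  have htc : |c| + 1 < t := by
    have h2 : (|c| + 1) * 2 ≤ s := by
      rw [hs']
      nlinarith [abs_nonneg c, div_pos (by norm_num : (0:ℝ) < 6) hδ']
    nlinarith [abs_nonneg c]
  have hrabs : |r| < 1 := by
    rw [hr', abs_div, abs_of_pos ht0, div_lt_one ht0]
    linarith [abs_nonneg c]
  have hr2 : r ^ 2 < 1 := by nlinarith [sq_abs r, abs_nonneg r]
  obtain ⟨q, hq'⟩ : ∃ q : ℝ, q = Real.sqrt (1 - r ^ 2) := ⟨_, rfl⟩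
  have hq0 : 0 < q := hq' ▸ Real.sqrt_pos.2 (by linarith)
  have hq2 : q ^ 2 = 1 - r ^ 2 := hq' ▸ Real.sq_sqrt (by linarith)
  have hq1 : q ≤ 1 := by nlinarith
  obtain ⟨u, hu0, hu1⟩ : ∃ u : EuclideanSpace ℝ (Fin 2),
      u 0 = q * v 0 - r * v 1 ∧ u 1 = r * v 0 + q * v 1 :=
    ⟨(WithLp.equiv 2 (∀ _ : Fin 2, ℝ)).symm ![q * v 0 - r * v 1, r * v 0 + q * v 1],
      by rw [WithLp.equiv_symm_apply, PiLp.toLp_apply]; simp,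
      by rw [WithLp.equiv_symm_apply, PiLp.toLp_apply]; simp⟩
  have hv2 : v 0 ^ 2 + v 1 ^ 2 = 1 := by
    have h := esq v
    rw [hv] at h
    linarith
  have hnu : ‖u‖ = 1 := by
    have h := esq u
    rw [hu0, hu1] at h
    have h3 : (q * v 0 - r * v 1) ^ 2 + (r * v 0 + q * v 1) ^ 2
        = (q ^ 2 + r ^ 2) * (v 0 ^ 2 + v 1 ^ 2) := by ring
    rw [h3, hv2, mul_one] at h
    have h2 : ‖u‖ ^ 2 = 1 := by rw [h]; linarith
    rw [← Real.sqrt_sq (norm_nonneg u), h2, Real.sqrt_one]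
  have h6 : 6 * (|c| + 1) < t * δ' := by
    have hmul := mul_lt_mul_of_pos_right hts hδ'
    rw [hs'] at hmul
    have hdm : 6 / δ' * δ' = 6 := div_mul_cancel₀ 6 (ne_of_gt hδ')
    have hexp : (|c| + 1) * (2 + 6 / δ') * δ' = 2 * δ' * (|c| + 1) + 6 * (|c| + 1) := by
      linear_combination (|c| + 1) * hdm
    rw [hexp] at hmul
    nlinarith [mul_nonneg hδ'.le (by positivity : (0:ℝ) ≤ |c| + 1)]
  have hsubsq : ‖u - v‖ ^ 2 ≤ 2 * r ^ 2 := by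
    have h := esq (u - v)
    rw [PiLp.sub_apply, PiLp.sub_apply, hu0, hu1] at h
    have h2 : ‖u - v‖ ^ 2 = ((q - 1) ^ 2 + r ^ 2) * (v 0 ^ 2 + v 1 ^ 2) := by rw [h]; ring
    rw [hv2, mul_one] at h2
    nlinarith
  have hsmall : ‖u - v‖ ^ 2 < (δ' / 3) ^ 2 := by
    have h8 : 18 * c ^ 2 < t ^ 2 * δ' ^ 2 := by
      nlinarith [abs_nonneg c, sq_abs c, mul_pos (mul_pos (by norm_num : (0:ℝ) < 6)
        (by positivity : (0:ℝ) < |c| + 1)) (mul_pos ht0 hδ')]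
    have hc2 : c ^ 2 = r ^ 2 * t ^ 2 := by rw [← hrt]; ring
    nlinarith [mul_pos ht0 ht0, sq_nonneg t]
  have hnuv : ‖u - v‖ < δ' / 3 :=
    lt_of_pow_lt_pow_left₀ 2 (by positivity) hsmall
  have hdist : ‖u - u₀‖ < 2 * δ' / 3 := by
    have htri : ‖u - u₀‖ ≤ ‖u - v‖ + ‖v - u₀‖ := by
      have h := dist_triangle u v u₀
      simpa [dist_eq_norm] using h
    rw [hε'] at hvu
    linarith
  have hu1pos : 0 < u 1 := by
    have h := coord_le (u - u₀) 1
    rw [PiLp.sub_apply] at h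
    have h2 := abs_lt.1 (h.trans_lt hdist)
    linarith [h2.1]
  have hx0 : x 0 = t * v 0 := by rw [hx, PiLp.smul_apply, smul_eq_mul]
  have hx1 : x 1 = t * v 1 := by rw [hx, PiLp.smul_apply, smul_eq_mul]
  have hTu : Tu u x = c := by
    rw [Tu, hx0, hx1, hu0, hu1]
    linear_combination (t * r) * hv2 + hrt
  exact ⟨u, hnu, hu1pos, by linarith, x, hxF, by rw [hTu, hc]; linarith,
    by rw [hTu, hc]; linarith⟩

theorem stmt11 (F : Set (EuclideanSpace ℝ (Fin 2))) (hF : F ⊆ upperH)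
    (hint : ∀ (u : EuclideanSpace ℝ (Fin 2)) (s ε : ℝ), ‖u‖ = 1 → 0 < u 1 →
      0 < s → 0 < ε → wedgeH u s ε ⊆ upperH → (F ∩ wedgeH u s ε).Nonempty) :
    {u : Splus | Dense (Tu u.1 '' F)} ∈ residual Splus := by
  have H : ∀ p : ℚ × ℚ,
      {u : Splus | (p.1 : ℝ) < (p.2 : ℝ) →
        ∃ x ∈ F, (p.1 : ℝ) < Tu u.1 x ∧ Tu u.1 x < (p.2 : ℝ)} ∈ residual Splus := by
    intro p
    by_cases hab : (p.1 : ℝ) < (p.2 : ℝ)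
    · have hset : {u : Splus | (p.1 : ℝ) < (p.2 : ℝ) →
          ∃ x ∈ F, (p.1 : ℝ) < Tu u.1 x ∧ Tu u.1 x < (p.2 : ℝ)} =
          ⋃ x ∈ F, {u : Splus | (p.1 : ℝ) < Tu u.1 x ∧ Tu u.1 x < (p.2 : ℝ)} := by
        ext u
        simp only [mem_setOf_eq, mem_iUnion, exists_prop]
        exact ⟨fun h => h hab, fun h _ => h⟩
      rw [hset]
      apply residual_of_dense_open
      · refine isOpen_biUnion fun x _ => ?_
        have hc : Continuous fun u : Splus => Tu u.1 x := by
          have h : ∀ i : Fin 2, Continuous fun u : Splus => u.1 i := fun i =>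
            (EuclideanSpace.proj i : EuclideanSpace ℝ (Fin 2) →L[ℝ] ℝ).continuous.comp
              continuous_subtype_val
          exact (continuous_const.mul (h 1)).sub (continuous_const.mul (h 0))
        exact isOpen_Ioo.preimage hc
      · rw [Metric.dense_iff]
        intro u₀ δ hδ
        obtain ⟨u, hnu, hu1, hdist, x, hxF, hx1, hx2⟩ :=
          keyDense F hint (p.1 : ℝ) (p.2 : ℝ) hab u₀.1 u₀.2.1 u₀.2.2 δ hδ
        refine ⟨⟨u, hnu, hu1⟩, ?_, ?_⟩
        · rw [mem_ball, Subtype.dist_eq, dist_eq_norm]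
          exact hdist
        · simp only [mem_iUnion, exists_prop]
          exact ⟨x, hxF, hx1, hx2⟩
    · have hset : {u : Splus | (p.1 : ℝ) < (p.2 : ℝ) →
          ∃ x ∈ F, (p.1 : ℝ) < Tu u.1 x ∧ Tu u.1 x < (p.2 : ℝ)} = univ := by
        ext u
        simp only [mem_setOf_eq, mem_univ, iff_true]
        exact fun h => absurd h hab
      rw [hset]
      exact univ_mem
  have H2 := (countable_iInter_mem (l := residual Splus)).2 H
  refine mem_of_superset H2 ?_
  intro u hu
  simp only [mem_iInter, mem_setOf_eq] at hu ⊢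
  rw [dense_iff_exists_between]
  intro a b hab
  obtain ⟨q1, hq1a, hq1b⟩ := exists_rat_btwn hab
  obtain ⟨q2, hq2a, hq2b⟩ := exists_rat_btwn hq1b
  obtain ⟨x, hxF, hx1, hx2⟩ := hu (q1, q2) (by exact_mod_cast hq2a)
  exact ⟨Tu u.1 x, ⟨x, hxF, rfl⟩, by linarith, by linarith⟩
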